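/- Given two overlapping tiles t_1 = (R_1, C_1) and t_2 = (R_2, C_2), the set of three tiles {(R_1 \ R_2, C_1), (R_1 ∩ R_2, C_1 ∪ C_2), (R_2 \ R_1, C_2)} is equivalent to {t_1, t_2}: a vector of permutations is allowed by both t_1 and t_2 if and only if it is allowed by all three new tiles. -/
import Mathlib


def AllowedBy {n m : ℕ} (P : Fin m → Equiv.Perm (Fin n))
    (t : Set (Fin n) × Set (Fin m)) : Prop :=
  ∀ i ∈ t.1, ∀ j ∈ t.2, ∀ j' ∈ t.2, P j i ∈ t.1 ∧ P j i = P j' i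

lemma perm_inv_mem {n : ℕ} (π : Equiv.Perm (Fin n)) (S : Set (Fin n))
    (hS : ∀ i ∈ S, π i ∈ S) {i : Fin n} (h : π i ∈ S) : i ∈ S := by
  have hbij : Set.BijOn π S S :=
    (S.toFinite.injOn_iff_bijOn_of_mapsTo hS).mp (π.injective.injOn)
  obtain ⟨x, hx, hxe⟩ := hbij.surjOn h
  rwa [← π.injective hxe]

theorem stmt4 {n m : ℕ} (P : Fin m → Equiv.Perm (Fin n))
    (R1 R2 : Set (Fin n)) (C1 C2 : Set (Fin m))
    (hoverlap : ((R1 ×ˢ C1) ∩ (R2 ×ˢ C2)).Nonempty) :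
    (AllowedBy P (R1, C1) ∧ AllowedBy P (R2, C2)) ↔
      (AllowedBy P (R1 \ R2, C1) ∧ AllowedBy P (R1 ∩ R2, C1 ∪ C2) ∧
        AllowedBy P (R2 \ R1, C2)) := by
  obtain ⟨⟨i0, j0⟩, ⟨hi1, hj1⟩, hi2, hj2⟩ := hoverlap
  simp only [AllowedBy] at *
  constructor
  · rintro ⟨h1, h2⟩
    have hR1 : ∀ j ∈ C1, ∀ i ∈ R1, P j i ∈ R1 := fun j hj i hi => (h1 i hi j hj j hj).1
    have hR2 : ∀ j ∈ C2, ∀ i ∈ R2, P j i ∈ R2 := fun j hj i hi => (h2 i hi j hj j hj).1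
    refine ⟨?_, ?_, ?_⟩
    · rintro i ⟨hiR1, hiR2⟩ j hj j' hj'
      refine ⟨⟨(h1 i hiR1 j hj j hj).1, fun hmem => hiR2 ?_⟩, (h1 i hiR1 j hj j' hj').2⟩
      have heq : P j i = P j0 i := (h1 i hiR1 j hj j0 hj1).2
      exact perm_inv_mem (P j0) R2 (hR2 j0 hj2) (heq ▸ hmem)
    · rintro i ⟨hiR1, hiR2⟩ j hj j' hj'
      have key : ∀ j ∈ C1 ∪ C2, P j i = P j0 i ∧ P j i ∈ R1 ∩ R2 := by
        rintro j (hj | hj)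
        · have heq := (h1 i hiR1 j hj j0 hj1).2
          exact ⟨heq, heq ▸ ⟨hR1 j0 hj1 i hiR1, hR2 j0 hj2 i hiR2⟩⟩
        · have heq := (h2 i hiR2 j hj j0 hj2).2
          exact ⟨heq, heq ▸ ⟨hR1 j0 hj1 i hiR1, hR2 j0 hj2 i hiR2⟩⟩
      exact ⟨(key j hj).2, ((key j hj).1).trans ((key j' hj').1).symm⟩
    · rintro i ⟨hiR2, hiR1⟩ j hj j' hj'
      refine ⟨⟨(h2 i hiR2 j hj j hj).1, fun hmem => hiR1 ?_⟩, (h2 i hiR2 j hj j' hj').2⟩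
      have heq : P j i = P j0 i := (h2 i hiR2 j hj j0 hj2).2
      exact perm_inv_mem (P j0) R1 (hR1 j0 hj1) (heq ▸ hmem)
  · rintro ⟨ha, hb, hc⟩
    constructor
    · intro i hi j hj j' hj'
      by_cases hiR2 : i ∈ R2
      · obtain ⟨hm, he⟩ := hb i ⟨hi, hiR2⟩ j (Or.inl hj) j' (Or.inl hj')
        exact ⟨hm.1, he⟩
      · obtain ⟨hm, he⟩ := ha i ⟨hi, hiR2⟩ j hj j' hj'
        exact ⟨hm.1, he⟩
    · intro i hi j hj j' hj'
      by_cases hiR1 : i ∈ R1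
      · obtain ⟨hm, he⟩ := hb i ⟨hiR1, hi⟩ j (Or.inr hj) j' (Or.inr hj')
        exact ⟨hm.2, he⟩
      · obtain ⟨hm, he⟩ := hc i ⟨hi, hiR1⟩ j hj j' hj'
        exact ⟨hm.1, he⟩
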